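/- For every s > 0 and every c > 0, ∫_c^∞ ( ∑_{n=0}^∞ e^{−2sn} φ_n(y)² ) dy ≤ e^{s} · e^{−c² tanh(s)} / ( 2 √(2π sinh(2s)) · tanh(s) · c ). (Indeed ∑_{n=0}^∞ e^{−2sn} φ_n(y)² = e^{s} (2π sinh(2s))^{−1/2} e^{−2 sinh(s)² y² / sinh(2s)}, and the Gaussian tail bound ∫_u^∞ e^{−x²} dx ≤ e^{−u²}/(2u) applies.) -/

import Mathlib

open Real MeasureTheory Set Filter Topology


noncomputable def physHermite : ℕ → ℝ → ℝ
  | 0, _ => 1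
  | 1, x => 2 * x
  | n + 2, x => 2 * x * physHermite (n + 1) x - 2 * ((n : ℝ) + 1) * physHermite n x

noncomputable def hermiteFn (n : ℕ) (x : ℝ) : ℝ :=
  ((2 : ℝ) ^ n * Nat.factorial n * Real.sqrt Real.pi) ^ (-(1 : ℝ) / 2) *
    physHermite n x * Real.exp (-x ^ 2 / 2)

noncomputable def hermI (n : ℕ) (x : ℝ) : ℂ :=
  ∫ u : ℝ, ((x : ℂ) + u * Complex.I) ^ n * Complex.exp (-(u : ℂ) ^ 2)

lemma key_poly_bound (x u b : ℝ) (hb : 0 < b) (m : ℕ) :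
    (1 + x ^ 2 + u ^ 2) ^ m * rexp (-b * u ^ 2) ≤
      (1 + x ^ 2 + 2 * (m + 1) / b) ^ m * rexp (-(b / 2) * u ^ 2) := by
  have hε : (0:ℝ) < b / (2 * (m + 1)) := by positivity
  have h1 : 1 + x ^ 2 + u ^ 2 ≤ (1 + x ^ 2 + 2 * (m + 1) / b) * rexp (b / (2 * (m + 1)) * u ^ 2) := by
    have he : 1 + b / (2 * (m + 1)) * u ^ 2 ≤ rexp (b / (2 * (m + 1)) * u ^ 2) :=
      Real.add_one_le_exp _ |>.trans_eq' (by ring_nf)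
    have h2 : 1 + x ^ 2 + u ^ 2 ≤
        (1 + x ^ 2 + 2 * (m + 1) / b) * (1 + b / (2 * (m + 1)) * u ^ 2) := by
      have key : u ^ 2 = (2 * ((m:ℝ) + 1) / b) * (b / (2 * ((m:ℝ) + 1)) * u ^ 2) := by
        field_simp
      set cc := 2 * ((m:ℝ) + 1) / b with hcc
      set P := b / (2 * ((m:ℝ) + 1)) * u ^ 2 with hP
      have hc0 : 0 ≤ cc := by positivity
      have hP0 : 0 ≤ P := by rw [hP]; positivity
      rw [key]
      nlinarith [mul_nonneg hP0 (sq_nonneg x), hc0, hP0]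
    calc 1 + x ^ 2 + u ^ 2 ≤ _ := h2
      _ ≤ _ := mul_le_mul_of_nonneg_left he (by positivity)
  have h3 : (1 + x ^ 2 + u ^ 2) ^ m ≤
      (1 + x ^ 2 + 2 * (m + 1) / b) ^ m * rexp (b / (2 * (m + 1)) * u ^ 2) ^ m := by
    rw [← mul_pow]
    exact pow_le_pow_left₀ (by positivity) h1 m
  have h4 : rexp (b / (2 * (m + 1)) * u ^ 2) ^ m ≤ rexp ((b/2) * u ^ 2) := by
    rw [← Real.exp_nat_mul]
    apply Real.exp_le_exp.2
    have hm : (m:ℝ) / (m+1) ≤ 1 := by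
      rw [div_le_one (by positivity)]; linarith
    have heq : (m:ℝ) * (b / (2 * (m + 1)) * u ^ 2) = (b/2*u^2) * ((m:ℝ)/(m+1)) := by
      field_simp
    rw [heq]
    calc (b/2*u^2) * ((m:ℝ)/(m+1)) ≤ (b/2*u^2) * 1 :=
          mul_le_mul_of_nonneg_left hm (by positivity)
      _ = (b/2) * u^2 := by ring
  calc (1 + x ^ 2 + u ^ 2) ^ m * rexp (-b * u ^ 2)
      ≤ ((1 + x ^ 2 + 2 * (m + 1) / b) ^ m * rexp ((b/2) * u ^ 2)) * rexp (-b * u ^ 2) := by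
        apply mul_le_mul_of_nonneg_right _ (Real.exp_pos _).le
        exact h3.trans (mul_le_mul_of_nonneg_left h4 (by positivity))
    _ = (1 + x ^ 2 + 2 * (m + 1) / b) ^ m * rexp (-(b / 2) * u ^ 2) := by
        rw [mul_assoc, ← Real.exp_add]; ring_nf

lemma integrable_poly_gauss (x : ℝ) {b : ℝ} (hb : 0 < b) (m : ℕ) :
    Integrable (fun u : ℝ => (1 + x ^ 2 + u ^ 2) ^ m * rexp (-b * u ^ 2)) := by
  apply Integrable.mono' ((integrable_exp_neg_mul_sq (show (0:ℝ) < b/2 by positivity)).const_mul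
    ((1 + x ^ 2 + 2 * (m + 1) / b) ^ m))
  · apply Continuous.aestronglyMeasurable; fun_prop
  · filter_upwards with u
    rw [Real.norm_of_nonneg (by positivity)]
    exact key_poly_bound x u b hb m

lemma norm_aux (x u : ℝ) (j k : ℕ) :
    ‖(u:ℂ) ^ j * ((x : ℂ) + u * Complex.I) ^ k * Complex.exp (-(u : ℂ) ^ 2)‖ ≤
      (1 + x ^ 2 + u ^ 2) ^ (j + k) * rexp (-1 * u ^ 2) := by
  have hax : abs x ≤ 1 + x ^ 2 + u ^ 2 := by
    nlinarith [abs_nonneg x, sq_abs x, sq_nonneg (abs x - 1), sq_nonneg u]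
  have hau : abs u ≤ 1 + x ^ 2 + u ^ 2 := by
    nlinarith [abs_nonneg u, sq_abs u, sq_nonneg (abs u - 1), sq_nonneg x]
  have hnorm : ‖(x : ℂ) + u * Complex.I‖ ≤ 1 + x ^ 2 + u ^ 2 := by
    calc ‖(x : ℂ) + u * Complex.I‖ ≤ ‖(x:ℂ)‖ + ‖(u:ℂ) * Complex.I‖ := norm_add_le _ _
      _ = abs x + abs u := by
          rw [norm_mul, Complex.norm_I, mul_one, Complex.norm_real, Complex.norm_real,
            Real.norm_eq_abs, Real.norm_eq_abs]
      _ ≤ 1 + x ^ 2 + u ^ 2 := by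
          nlinarith [abs_nonneg x, abs_nonneg u, sq_abs x, sq_abs u, sq_nonneg (abs x - 1),
            sq_nonneg (abs u - 1)]
  have hu : ‖(u:ℂ)‖ ≤ 1 + x ^ 2 + u ^ 2 := by
    rw [Complex.norm_real, Real.norm_eq_abs]; exact hau
  have hexp : ‖Complex.exp (-(u : ℂ) ^ 2)‖ = rexp (-1 * u ^ 2) := by
    rw [Complex.norm_exp,
      show (-(u:ℂ)^2) = ((-1 * u^2 : ℝ) : ℂ) by push_cast; ring, Complex.ofReal_re]
  calc ‖(u:ℂ) ^ j * ((x : ℂ) + u * Complex.I) ^ k * Complex.exp (-(u : ℂ) ^ 2)‖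
      = ‖(u:ℂ)‖ ^ j * ‖(x : ℂ) + u * Complex.I‖ ^ k * ‖Complex.exp (-(u : ℂ) ^ 2)‖ := by
        rw [norm_mul, norm_mul, norm_pow, norm_pow]
    _ ≤ (1 + x ^ 2 + u ^ 2) ^ j * (1 + x ^ 2 + u ^ 2) ^ k * rexp (-1 * u ^ 2) := by
        rw [hexp]
        apply mul_le_mul_of_nonneg_right _ (Real.exp_pos _).le
        exact mul_le_mul (pow_le_pow_left₀ (norm_nonneg _) hu j)
          (pow_le_pow_left₀ (norm_nonneg _) hnorm k) (by positivity) (by positivity)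
    _ = (1 + x ^ 2 + u ^ 2) ^ (j + k) * rexp (-1 * u ^ 2) := by rw [← pow_add]

lemma integrable_aux (x : ℝ) (j k : ℕ) :
    Integrable (fun u : ℝ => (u:ℂ) ^ j * ((x : ℂ) + u * Complex.I) ^ k *
      Complex.exp (-(u : ℂ) ^ 2)) := by
  apply Integrable.mono' (integrable_poly_gauss x one_pos (j + k))
  · apply Continuous.aestronglyMeasurable
    fun_prop
  · filter_upwards with u
    exact norm_aux x u j k

lemma tendsto_aux (x : ℝ) (j k : ℕ) {l : Filter ℝ}
    (hl : Tendsto (fun u : ℝ => u ^ 2) l atTop) :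
    Tendsto (fun u : ℝ => (u:ℂ) ^ j * ((x : ℂ) + u * Complex.I) ^ k *
      Complex.exp (-(u : ℂ) ^ 2)) l (𝓝 0) := by
  rw [tendsto_zero_iff_norm_tendsto_zero]
  apply squeeze_zero (fun t => norm_nonneg _) (fun t => norm_aux x t j k)
  have h1 : Tendsto (fun w : ℝ => (1 + x ^ 2 + w) ^ (j+k) * rexp (-1 * w)) atTop (𝓝 0) := by
    have h2 := tendsto_pow_mul_exp_neg_atTop_nhds_zero (j + k)
    have h3 : Tendsto (fun w : ℝ => w + (1 + x ^ 2)) atTop atTop :=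
      tendsto_atTop_add_const_right _ _ tendsto_id
    have h4 := (h2.comp h3).const_mul (rexp (1 + x ^ 2))
    simp only [mul_zero] at h4
    apply h4.congr'
    filter_upwards with w
    simp only [Function.comp]
    have hkey : rexp (1+x^2) * rexp (-(w+(1+x^2))) = rexp (-1*w) := by
      rw [← Real.exp_add]; ring_nf
    calc rexp (1 + x ^ 2) * ((w + (1 + x ^ 2)) ^ (j + k) * rexp (-(w + (1 + x ^ 2))))
        = (w + (1 + x ^ 2)) ^ (j + k) * (rexp (1+x^2) * rexp (-(w+(1+x^2)))) := by ring
      _ = (1 + x ^ 2 + w) ^ (j+k) * rexp (-1 * w) := by rw [hkey]; ring_nf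
  exact h1.comp hl

lemma sq_tendsto_atTop : Tendsto (fun u : ℝ => u ^ 2) atTop atTop :=
  tendsto_pow_atTop (by norm_num)

lemma sq_tendsto_atBot : Tendsto (fun u : ℝ => u ^ 2) atBot atTop := by
  have h : Tendsto (fun u : ℝ => |u| ^ 2) atBot atTop :=
    (tendsto_pow_atTop (n := 2) (by norm_num)).comp tendsto_abs_atBot_atTop
  exact h.congr fun u => sq_abs u

lemma integral_deriv_eq_zero' {g g' : ℝ → ℂ} (hd : ∀ u, HasDerivAt g (g' u) u)
    (hi : Integrable g') (ht : Tendsto g atTop (𝓝 0)) (hb : Tendsto g atBot (𝓝 0)) :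
    ∫ u : ℝ, g' u = 0 := by
  have h1 : ∫ u in Iic (0:ℝ), g' u = g 0 - 0 :=
    integral_Iic_of_hasDerivAt_of_tendsto' (fun x _ => hd x) hi.integrableOn hb
  have h2 : ∫ u in Ioi (0:ℝ), g' u = 0 - g 0 :=
    integral_Ioi_of_hasDerivAt_of_tendsto' (fun x _ => hd x) hi.integrableOn ht
  rw [← intervalIntegral.integral_Iic_add_Ioi (b := (0:ℝ)) hi.integrableOn hi.integrableOn, h1, h2]
  ring

lemma hasDerivAt_gk (x : ℝ) (k : ℕ) (u : ℝ) :
    HasDerivAt (fun u : ℝ => ((x:ℂ) + u * Complex.I) ^ (k+1) * Complex.exp (-(u:ℂ)^2))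
      ((((k:ℂ)+1) * ((x:ℂ)+u*Complex.I)^k * Complex.I) * Complex.exp (-(u:ℂ)^2)
        + ((x:ℂ)+u*Complex.I)^(k+1) * (Complex.exp (-(u:ℂ)^2) * (-(2*u)))) u := by
  have h1 : HasDerivAt (fun z : ℂ => (x:ℂ) + z * Complex.I) Complex.I u := by
    simpa using ((hasDerivAt_id (u:ℂ)).mul_const Complex.I).const_add (x:ℂ)
  have h2 := h1.pow (k+1)
  simp only [Nat.add_sub_cancel] at h2
  have h3 : HasDerivAt (fun z : ℂ => Complex.exp (-z^2))
      (Complex.exp (-(u:ℂ)^2) * (-(2*u))) (u:ℂ) := by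
    have := ((hasDerivAt_pow 2 (u:ℂ)).neg).cexp
    simpa using this.congr_deriv (by push_cast; simp only [Pi.neg_apply]; ring)
  have h4 := (h2.mul h3).comp_ofReal
  simp only [Pi.mul_apply, Pi.pow_apply] at h4
  convert h4 using 1
  push_cast
  ring

lemma ibp_zero (x : ℝ) : (∫ u : ℝ, (u:ℂ) * Complex.exp (-(u:ℂ)^2)) = 0 := by
  apply integral_deriv_eq_zero'
    (g := fun u : ℝ => (-(1:ℂ)/2) * Complex.exp (-(u:ℂ)^2)) (hd := fun u => ?_)
  · simpa using (integrable_aux x 1 0)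
  · have := (tendsto_aux x 0 0 sq_tendsto_atTop).const_mul (-(1:ℂ)/2)
    simpa using this
  · have := (tendsto_aux x 0 0 sq_tendsto_atBot).const_mul (-(1:ℂ)/2)
    simpa using this
  · have h3 : HasDerivAt (fun z : ℂ => Complex.exp (-z^2))
        (Complex.exp (-(u:ℂ)^2) * (-(2*u))) (u:ℂ) := by
      have := ((hasDerivAt_pow 2 (u:ℂ)).neg).cexp
      simpa using this.congr_deriv (by push_cast; simp only [Pi.neg_apply]; ring)
    have h4 := (h3.comp_ofReal).const_mul (-(1:ℂ)/2)
    convert h4 using 1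
    · rfl
    ring

lemma ibp_succ (x : ℝ) (k : ℕ) :
    (∫ u : ℝ, (u:ℂ) * ((x:ℂ)+u*Complex.I)^(k+1) * Complex.exp (-(u:ℂ)^2))
      = ((k:ℂ)+1) * Complex.I / 2 * hermI k x := by
  have hzero : (∫ u : ℝ, ((u:ℂ) * ((x:ℂ)+u*Complex.I)^(k+1) * Complex.exp (-(u:ℂ)^2)
      - ((k:ℂ)+1) * Complex.I / 2 * (((x:ℂ)+u*Complex.I)^k * Complex.exp (-(u:ℂ)^2)))) = 0 := by
    apply integral_deriv_eq_zero'
      (g := fun u : ℝ => (-(1:ℂ)/2) * (((x:ℂ)+u*Complex.I)^(k+1) * Complex.exp (-(u:ℂ)^2)))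
      (hd := fun u => ?_)
    · apply Integrable.sub
      · simpa using (integrable_aux x 1 (k+1))
      · have := (integrable_aux x 0 k).const_mul (((k:ℂ)+1) * Complex.I / 2)
        simpa only [pow_zero, one_mul] using this
    · have := (tendsto_aux x 0 (k+1) sq_tendsto_atTop).const_mul (-(1:ℂ)/2)
      simpa using this
    · have := (tendsto_aux x 0 (k+1) sq_tendsto_atBot).const_mul (-(1:ℂ)/2)
      simpa using this
    · have h4 := (hasDerivAt_gk x k u).const_mul (-(1:ℂ)/2)
      convert h4 using 1
      · rfl
      ring
  have hi1 : Integrable (fun u : ℝ => (u:ℂ) * ((x:ℂ)+u*Complex.I)^(k+1) *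
      Complex.exp (-(u:ℂ)^2)) := by simpa using (integrable_aux x 1 (k+1))
  have hi2 : Integrable (fun u : ℝ => ((k:ℂ)+1) * Complex.I / 2 *
      (((x:ℂ)+u*Complex.I)^k * Complex.exp (-(u:ℂ)^2))) := by
    have := (integrable_aux x 0 k).const_mul (((k:ℂ)+1) * Complex.I / 2)
    simpa only [pow_zero, one_mul] using this
  rw [integral_sub hi1 hi2, sub_eq_zero] at hzero
  rw [hzero, integral_const_mul]
  rfl

lemma hermI_zero (x : ℝ) : hermI 0 x = ((Real.sqrt π : ℝ) : ℂ) := by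
  unfold hermI
  simp only [pow_zero, one_mul]
  have h := integral_gaussian_complex (b := 1) (by norm_num)
  simp only [neg_mul, one_mul, div_one] at h
  rw [show (fun u : ℝ => Complex.exp (-(u:ℂ)^2)) = fun u : ℝ => Complex.exp (-1 * (u:ℂ)^2) by
    funext u; ring_nf]
  rw [show (∫ u : ℝ, Complex.exp (-1 * (u:ℂ)^2)) = (↑π / 1) ^ (1/2 : ℂ) from
    integral_gaussian_complex (by norm_num)]
  rw [div_one, show (1/2 : ℂ) = ((1/2 : ℝ) : ℂ) by norm_num, ← Complex.ofReal_cpow pi_pos.le,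
    Real.sqrt_eq_rpow]

lemma hermI_one (x : ℝ) : hermI 1 x = (x : ℂ) * ((Real.sqrt π : ℝ) : ℂ) := by
  have expand : (fun u : ℝ => ((x:ℂ) + u * Complex.I) ^ 1 * Complex.exp (-(u:ℂ)^2))
      = fun u : ℝ => (x:ℂ) * (((x:ℂ) + u * Complex.I) ^ 0 * Complex.exp (-(u:ℂ)^2))
          + Complex.I * ((u:ℂ) * Complex.exp (-(u:ℂ)^2)) := by
    funext u; simp; ring
  have hi1 : Integrable (fun u : ℝ =>
      (x:ℂ) * (((x:ℂ) + u * Complex.I) ^ 0 * Complex.exp (-(u:ℂ)^2))) := by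
    have := (integrable_aux x 0 0).const_mul (x:ℂ)
    simpa only [pow_zero, one_mul] using this
  have hi2 : Integrable (fun u : ℝ => Complex.I * ((u:ℂ) * Complex.exp (-(u:ℂ)^2))) := by
    have := (integrable_aux x 1 0).const_mul Complex.I
    simpa only [pow_one, pow_zero, mul_one] using this
  unfold hermI
  rw [expand, integral_add hi1 hi2, integral_const_mul, integral_const_mul]
  rw [show (∫ u : ℝ, (u:ℂ) * Complex.exp (-(u:ℂ)^2)) = 0 from ibp_zero x]
  rw [show (∫ u : ℝ, ((x:ℂ) + u * Complex.I) ^ 0 * Complex.exp (-(u:ℂ)^2)) = hermI 0 x from rfl,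
    hermI_zero]
  ring

lemma hermI_rec (x : ℝ) (k : ℕ) :
    hermI (k+2) x = (x:ℂ) * hermI (k+1) x - ((k:ℂ)+1)/2 * hermI k x := by
  have expand : (fun u : ℝ => ((x:ℂ) + u * Complex.I) ^ (k+2) * Complex.exp (-(u:ℂ)^2))
      = fun u : ℝ => (x:ℂ) * (((x:ℂ) + u * Complex.I) ^ (k+1) * Complex.exp (-(u:ℂ)^2))
          + Complex.I * ((u:ℂ) * ((x:ℂ) + u * Complex.I) ^ (k+1) * Complex.exp (-(u:ℂ)^2)) := by
    funext u; rw [pow_succ]; ring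
  have hi1 : Integrable (fun u : ℝ =>
      (x:ℂ) * (((x:ℂ) + u * Complex.I) ^ (k+1) * Complex.exp (-(u:ℂ)^2))) := by
    have := (integrable_aux x 0 (k+1)).const_mul (x:ℂ)
    simpa only [pow_zero, one_mul] using this
  have hi2 : Integrable (fun u : ℝ =>
      Complex.I * ((u:ℂ) * ((x:ℂ) + u * Complex.I) ^ (k+1) * Complex.exp (-(u:ℂ)^2))) := by
    have := (integrable_aux x 1 (k+1)).const_mul Complex.I
    simpa only [pow_one] using this
  show (∫ u : ℝ, ((x : ℂ) + u * Complex.I) ^ (k+2) * Complex.exp (-(u : ℂ) ^ 2)) = _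
  rw [expand, integral_add hi1 hi2, integral_const_mul, integral_const_mul]
  rw [ibp_succ x k]
  rw [show (∫ u : ℝ, ((x:ℂ) + u * Complex.I) ^ (k+1) * Complex.exp (-(u:ℂ)^2))
    = hermI (k+1) x from rfl]
  linear_combination ((k:ℂ)+1) * hermI k x / 2 * Complex.I_sq

lemma hermI_eq (x : ℝ) : ∀ n, hermI n x = ((Real.sqrt π / 2^n * physHermite n x : ℝ) : ℂ) := by
  intro n
  induction n using Nat.strong_induction_on with
  | _ n ih =>
    match n with
    | 0 => simp [hermI_zero, physHermite]
    | 1 =>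
      rw [hermI_one]
      push_cast [physHermite]
      ring
    | (m+2) =>
      rw [hermI_rec, ih (m+1) (by omega), ih m (by omega)]
      show _ = ((Real.sqrt π / 2^(m+2) * physHermite (m+2) x : ℝ) : ℂ)
      rw [show physHermite (m+2) x
        = 2 * x * physHermite (m + 1) x - 2 * ((m : ℝ) + 1) * physHermite m x from rfl]
      push_cast
      ring

lemma cpow_half_eq {r : ℝ} (hr : 0 ≤ r) :
    ((r:ℂ)) ^ (1/2 : ℂ) = ((Real.sqrt r : ℝ) : ℂ) := by
  rw [show (1/2 : ℂ) = ((1/2 : ℝ) : ℂ) by norm_num, ← Complex.ofReal_cpow hr, Real.sqrt_eq_rpow]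

lemma I_cube : Complex.I ^ 3 = -Complex.I := by
  rw [pow_succ, Complex.I_sq]; ring

lemma I_four : Complex.I ^ 4 = 1 := by
  rw [show (4:ℕ) = 2 + 2 from rfl, pow_add, Complex.I_sq]; ring

lemma norm_sq_add_mul_I (y u : ℝ) : ‖(y:ℂ) + u * Complex.I‖ ^ 2 = y ^ 2 + u ^ 2 := by
  rw [Complex.norm_add_mul_I, Real.sq_sqrt (by positivity)]

section mehler

variable (t y : ℝ)

noncomputable def FF (t y : ℝ) (n : ℕ) (p : ℝ × ℝ) : ℂ :=
  (((2*t)^n / n.factorial : ℝ) : ℂ) *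
    (((y:ℂ) + p.1 * Complex.I) ^ n * Complex.exp (-(p.1:ℂ)^2)) *
    (((y:ℂ) + p.2 * Complex.I) ^ n * Complex.exp (-(p.2:ℂ)^2))

noncomputable def EE (t y : ℝ) (p : ℝ × ℝ) : ℂ :=
  Complex.exp (2*t*((y:ℂ) + p.1 * Complex.I)*((y:ℂ) + p.2 * Complex.I)) *
    (Complex.exp (-(p.1:ℂ)^2) * Complex.exp (-(p.2:ℂ)^2))

noncomputable def MM (t y : ℝ) (p : ℝ × ℝ) : ℝ :=
  rexp (2*t*y^2) * (rexp (-(1-t) * p.1^2) * rexp (-(1-t) * p.2^2))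

lemma integrable_one_dim (n : ℕ) :
    Integrable (fun u : ℝ => ((y:ℂ) + u * Complex.I) ^ n * Complex.exp (-(u:ℂ)^2)) := by
  simpa only [pow_zero, one_mul] using integrable_aux y 0 n

lemma FF_integrable (n : ℕ) : Integrable (FF t y n) := by
  have h1 : Integrable (fun u : ℝ => (((2*t)^n / n.factorial : ℝ) : ℂ) *
      (((y:ℂ) + u * Complex.I) ^ n * Complex.exp (-(u:ℂ)^2))) :=
    (integrable_one_dim y n).const_mul _
  have h2 := h1.mul_prod (integrable_one_dim y n)
  rw [← Measure.volume_eq_prod] at h2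
  exact h2.congr (by filter_upwards with p; rw [FF])

lemma FF_integral (n : ℕ) :
    ∫ p : ℝ × ℝ, FF t y n p =
      (((2*t)^n / n.factorial * (Real.sqrt π / 2^n * physHermite n y)^2 : ℝ) : ℂ) := by
  have h0 : ∫ p : ℝ × ℝ, FF t y n p =
      ∫ p : ℝ × ℝ, (fun u : ℝ => (((2*t)^n / n.factorial : ℝ) : ℂ) *
          (((y:ℂ) + u * Complex.I) ^ n * Complex.exp (-(u:ℂ)^2))) p.1 *
        (fun v : ℝ => ((y:ℂ) + v * Complex.I) ^ n * Complex.exp (-(v:ℂ)^2)) p.2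
        ∂(volume.prod volume) := by
    rw [← Measure.volume_eq_prod]
    rfl
  have h1 := integral_prod_mul (μ := (volume : Measure ℝ)) (ν := (volume : Measure ℝ))
    (f := fun u : ℝ => (((2*t)^n / n.factorial : ℝ) : ℂ) *
      (((y:ℂ) + u * Complex.I) ^ n * Complex.exp (-(u:ℂ)^2)))
    (g := fun v : ℝ => ((y:ℂ) + v * Complex.I) ^ n * Complex.exp (-(v:ℂ)^2))
  rw [h0, h1, integral_const_mul]
  rw [show (∫ u : ℝ, ((y:ℂ) + u * Complex.I) ^ n * Complex.exp (-(u:ℂ)^2)) = hermI n y from rfl,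
    hermI_eq y n]
  push_cast
  ring

lemma norm_FF (ht0 : 0 < t) (n : ℕ) (p : ℝ × ℝ) :
    ‖FF t y n p‖ = (2*t*(‖(y:ℂ) + p.1 * Complex.I‖ * ‖(y:ℂ) + p.2 * Complex.I‖))^n
      / n.factorial * (rexp (-p.1^2) * rexp (-p.2^2)) := by
  have he : ∀ u : ℝ, ‖Complex.exp (-(u:ℂ)^2)‖ = rexp (-u^2) := by
    intro u
    rw [Complex.norm_exp,
      show (-(u:ℂ)^2) = ((-u^2 : ℝ) : ℂ) by push_cast; ring, Complex.ofReal_re]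
  rw [FF, norm_mul, norm_mul, norm_mul, norm_mul, norm_pow, norm_pow, he, he,
    Complex.norm_real, Real.norm_eq_abs, abs_of_nonneg (by positivity)]
  rw [mul_pow, mul_pow]
  ring

lemma MM_integrable (ht1 : t < 1) : Integrable (MM t y) := by
  have h : (0:ℝ) < 1 - t := by linarith
  have h2 := ((integrable_exp_neg_mul_sq h).mul_prod (integrable_exp_neg_mul_sq h)).const_mul
    (rexp (2*t*y^2))
  rw [← Measure.volume_eq_prod] at h2
  exact h2.congr (by filter_upwards with p; rw [MM])

lemma sum_norm_FF_le (ht0 : 0 < t) (ht1 : t < 1) (N : ℕ) (p : ℝ × ℝ) :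
    ∑ n ∈ Finset.range N, ‖FF t y n p‖ ≤ MM t y p := by
  set a := ‖(y:ℂ) + p.1 * Complex.I‖ with ha
  set b := ‖(y:ℂ) + p.2 * Complex.I‖ with hb
  have ha2 : a^2 = y^2 + p.1^2 := norm_sq_add_mul_I y p.1
  have hb2 : b^2 = y^2 + p.2^2 := norm_sq_add_mul_I y p.2
  have ha0 : 0 ≤ a := norm_nonneg _
  have hb0 : 0 ≤ b := norm_nonneg _
  have step1 : ∑ n ∈ Finset.range N, ‖FF t y n p‖
      = (∑ n ∈ Finset.range N, (2*t*(a*b))^n / n.factorial) * (rexp (-p.1^2) * rexp (-p.2^2)) := by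
    rw [Finset.sum_mul]
    exact Finset.sum_congr rfl fun n _ => by rw [norm_FF t y ht0 n p]
  rw [step1]
  have step2 : (∑ n ∈ Finset.range N, (2*t*(a*b))^n / n.factorial) ≤ rexp (2*t*(a*b)) :=
    Real.sum_le_exp_of_nonneg (by positivity) N
  have step3 : rexp (2*t*(a*b)) ≤ rexp (t * (a^2 + b^2)) := by
    apply Real.exp_le_exp.2
    have := two_mul_le_add_sq a b
    calc 2*t*(a*b) = t * (2*a*b) := by ring
      _ ≤ t * (a^2+b^2) := mul_le_mul_of_nonneg_left this ht0.le
  calc (∑ n ∈ Finset.range N, (2*t*(a*b))^n / n.factorial) * (rexp (-p.1^2) * rexp (-p.2^2))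
      ≤ rexp (t * (a^2 + b^2)) * (rexp (-p.1^2) * rexp (-p.2^2)) := by
        apply mul_le_mul_of_nonneg_right (step2.trans step3) (by positivity)
    _ = MM t y p := by
        rw [ha2, hb2, MM, ← Real.exp_add, ← Real.exp_add, ← Real.exp_add, ← Real.exp_add]
        congr 1
        ring

lemma summable_int_norm_FF (ht0 : 0 < t) (ht1 : t < 1) :
    Summable (fun n : ℕ => ∫ p : ℝ × ℝ, ‖FF t y n p‖) := by
  apply summable_of_sum_range_le (c := ∫ p : ℝ × ℝ, MM t y p)
    (fun n => integral_nonneg fun p => norm_nonneg _)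
  intro N
  rw [← integral_finset_sum _ (fun n _ => (FF_integrable t y n).norm)]
  exact integral_mono (integrable_finset_sum _ (fun n _ => (FF_integrable t y n).norm))
    (MM_integrable t y ht1) (sum_norm_FF_le t y ht0 ht1 N)

lemma FF_hasSum (p : ℝ × ℝ) : HasSum (fun n => FF t y n p) (EE t y p) := by
  have h := (NormedSpace.expSeries_div_hasSum_exp
    (2*t*((y:ℂ) + p.1 * Complex.I)*((y:ℂ) + p.2 * Complex.I))).mul_right
    (Complex.exp (-(p.1:ℂ)^2) * Complex.exp (-(p.2:ℂ)^2))
  rw [← Complex.exp_eq_exp_ℂ] at h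
  have hfun : (fun n : ℕ => (2*(t:ℂ)*((y:ℂ)+p.1*Complex.I)*((y:ℂ)+p.2*Complex.I))^n
      / n.factorial * (Complex.exp (-(p.1:ℂ)^2) * Complex.exp (-(p.2:ℂ)^2)))
      = fun n => FF t y n p := by
    funext n
    rw [FF]
    push_cast
    rw [mul_pow, mul_pow]
    ring
  rw [hfun] at h
  rw [EE]
  exact h

lemma EE_norm_le (ht0 : 0 < t) (p : ℝ × ℝ) : ‖EE t y p‖ ≤ MM t y p := by
  have hz : 2*(t:ℂ)*((y:ℂ) + p.1 * Complex.I)*((y:ℂ) + p.2 * Complex.I)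
      = ((2*t*(y^2 - p.1*p.2) : ℝ) : ℂ) + ((2*t*y*(p.1+p.2) : ℝ) : ℂ) * Complex.I := by
    push_cast
    linear_combination (2*(t:ℂ)*(p.1:ℂ)*(p.2:ℂ)) * Complex.I_sq
  have he : ∀ u : ℝ, ‖Complex.exp (-(u:ℂ)^2)‖ = rexp (-u^2) := by
    intro u
    rw [Complex.norm_exp,
      show (-(u:ℂ)^2) = ((-u^2 : ℝ) : ℂ) by push_cast; ring, Complex.ofReal_re]
  have hre : ((((2*t*(y^2 - p.1*p.2) : ℝ)) : ℂ) + (((2*t*y*(p.1+p.2) : ℝ)) : ℂ) * Complex.I).re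
      = 2*t*(y^2 - p.1*p.2) := by
    rw [Complex.add_re, Complex.ofReal_re, Complex.mul_re, Complex.I_re, Complex.I_im,
      Complex.ofReal_re, Complex.ofReal_im]
    ring
  have h1 : ‖EE t y p‖ = rexp (2*t*(y^2 - p.1*p.2)) * (rexp (-p.1^2) * rexp (-p.2^2)) := by
    rw [EE, norm_mul, norm_mul, he, he, hz, Complex.norm_exp, hre]
  rw [h1, MM]
  have harg : 2*t*(y^2 - p.1*p.2) + (-p.1^2) + (-p.2^2)
      ≤ 2*t*y^2 + (-(1-t)*p.1^2) + (-(1-t)*p.2^2) := by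
    nlinarith [sq_nonneg (p.1 + p.2), ht0.le]
  calc rexp (2*t*(y^2 - p.1*p.2)) * (rexp (-p.1^2) * rexp (-p.2^2))
      = rexp (2*t*(y^2 - p.1*p.2) + (-p.1^2) + (-p.2^2)) := by
        rw [← Real.exp_add, ← Real.exp_add]; ring_nf
    _ ≤ rexp (2*t*y^2 + (-(1-t)*p.1^2) + (-(1-t)*p.2^2)) := Real.exp_le_exp.2 harg
    _ = rexp (2*t*y^2) * (rexp (-(1-t)*p.1^2) * rexp (-(1-t)*p.2^2)) := by
        rw [← Real.exp_add, ← Real.exp_add]; ring_nf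

lemma EE_continuous : Continuous (EE t y) := by
  apply Continuous.mul
  · apply Complex.continuous_exp.comp
    fun_prop
  · apply Continuous.mul <;> [apply Complex.continuous_exp.comp; apply Complex.continuous_exp.comp]
      <;> fun_prop

lemma EE_integrable (ht0 : 0 < t) (ht1 : t < 1) : Integrable (EE t y) := by
  apply Integrable.mono' (MM_integrable t y ht1) (EE_continuous t y).aestronglyMeasurable
  filter_upwards with p
  exact EE_norm_le t y ht0 p

lemma EE_integral (ht0 : 0 < t) (ht1 : t < 1) :
    ∫ p : ℝ × ℝ, EE t y p =
      ((Real.sqrt π * Real.sqrt (π / (1 - t^2)) * rexp (2*t*y^2/(1+t)) : ℝ) : ℂ) := by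
  have ht1c : ((1:ℝ) + t) ≠ 0 := by positivity
  have htsq : (0:ℝ) < 1 - t^2 := by nlinarith
  have hEEint := EE_integrable t y ht0 ht1
  rw [Measure.volume_eq_prod] at hEEint ⊢
  rw [integral_prod _ hEEint]
  -- inner integral over v
  have inner : ∀ u : ℝ, (∫ v : ℝ, EE t y (u, v)) =
      (↑π / -(-1)) ^ (1/2 : ℂ) * Complex.exp
        ((2*(t:ℂ)*((y:ℂ)+u*Complex.I)*(y:ℂ) - (u:ℂ)^2)
          - (2*(t:ℂ)*((y:ℂ)+u*Complex.I)*Complex.I)^2 / (4 * (-1))) := by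
    intro u
    have hfun : (fun v : ℝ => EE t y (u, v)) = fun v : ℝ =>
        Complex.exp ((-1) * (v:ℂ)^2 + (2*(t:ℂ)*((y:ℂ)+u*Complex.I)*Complex.I) * (v:ℂ)
          + (2*(t:ℂ)*((y:ℂ)+u*Complex.I)*(y:ℂ) - (u:ℂ)^2)) := by
      funext v
      rw [EE, ← Complex.exp_add, ← Complex.exp_add]
      congr 1
      ring
    rw [hfun, integral_cexp_quadratic (by norm_num) _ _]
  rw [show (∫ u : ℝ, ∫ v : ℝ, EE t y (u, v)) = ∫ u : ℝ, (↑π / -(-1)) ^ (1/2 : ℂ) *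
      Complex.exp ((2*(t:ℂ)*((y:ℂ)+u*Complex.I)*(y:ℂ) - (u:ℂ)^2)
        - (2*(t:ℂ)*((y:ℂ)+u*Complex.I)*Complex.I)^2 / (4 * (-1))) from by
    exact integral_congr_ae (by filter_upwards with u; rw [inner u]), integral_const_mul]
  -- outer integral over u
  have houter : (fun u : ℝ => Complex.exp ((2*(t:ℂ)*((y:ℂ)+u*Complex.I)*(y:ℂ) - (u:ℂ)^2)
        - (2*(t:ℂ)*((y:ℂ)+u*Complex.I)*Complex.I)^2 / (4 * (-1))))
      = fun u : ℝ => Complex.exp (((t^2 - 1 : ℝ) : ℂ) * (u:ℂ)^2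
        + (((2*t*y*(1-t) : ℝ)) : ℂ) * Complex.I * (u:ℂ) + (((2*t - t^2) * y^2 : ℝ) : ℂ)) := by
    funext u
    congr 1
    push_cast
    linear_combination ((t:ℂ)^2*(y:ℂ)^2 + 2*(t:ℂ)^2*(y:ℂ)*(u:ℂ)*Complex.I
      + (t:ℂ)^2*(u:ℂ)^2*(Complex.I^2 - 1)) * Complex.I_sq
  rw [houter, integral_cexp_quadratic (by rw [Complex.ofReal_re]; linarith) _ _]
  -- now pure algebra
  have hb : ((t^2 - 1 : ℝ) : ℂ) ≠ 0 :=
    Complex.ofReal_ne_zero.mpr (by nlinarith)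
  have hc2 : ((((2*t*y*(1-t) : ℝ)) : ℂ) * Complex.I)^2
      = ((-((2*t*y*(1-t))^2) : ℝ) : ℂ) := by
    push_cast
    linear_combination (2*(t:ℂ)*(y:ℂ)*(1-(t:ℂ)))^2 * Complex.I_sq
  have hexp : ((((2*t - t^2) * y^2 : ℝ)) : ℂ)
      - ((((2*t*y*(1-t) : ℝ)) : ℂ) * Complex.I)^2 / (4 * ((t^2 - 1 : ℝ) : ℂ))
      = (((2*t*y^2/(1+t) : ℝ)) : ℂ) := by
    rw [hc2, show (4 * ((t^2 - 1 : ℝ) : ℂ)) = ((4*(t^2-1) : ℝ) : ℂ) by push_cast; ring,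
      ← Complex.ofReal_div, ← Complex.ofReal_sub]
    congr 1
    have h4 : (4*(t^2-1) : ℝ) ≠ 0 := by nlinarith
    have h5 : (t^2-1 : ℝ) ≠ 0 := by nlinarith
    field_simp
    ring
  rw [hexp]
  have hdiv : ((π:ℂ) / -(((t^2 - 1 : ℝ)) : ℂ)) = (((π/(1 - t^2) : ℝ)) : ℂ) := by
    rw [show -(((t^2 - 1 : ℝ)) : ℂ) = ((1 - t^2 : ℝ) : ℂ) by push_cast; ring,
      ← Complex.ofReal_div]
  rw [show ((π:ℂ) / -(-1)) = ((π:ℝ):ℂ) by norm_num, cpow_half_eq pi_pos.le, hdiv,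
    cpow_half_eq (by positivity), ← Complex.ofReal_exp]
  push_cast
  ring

lemma mehler_hasSum (ht0 : 0 < t) (ht1 : t < 1) :
    HasSum (fun n : ℕ => (2*t)^n / (n.factorial : ℝ) * (Real.sqrt π / 2^n * physHermite n y)^2)
      (Real.sqrt π * Real.sqrt (π / (1 - t^2)) * rexp (2*t*y^2/(1+t))) := by
  have h := hasSum_integral_of_summable_integral_norm (FF_integrable t y)
    (summable_int_norm_FF t y ht0 ht1)
  have htsum : ∫ p : ℝ × ℝ, (∑' n, FF t y n p) = ∫ p : ℝ × ℝ, EE t y p := by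
    apply integral_congr_ae
    filter_upwards with p
    exact (FF_hasSum t y p).tsum_eq
  rw [htsum, EE_integral t y ht0 ht1] at h
  have h2 : (fun n : ℕ => ∫ p : ℝ × ℝ, FF t y n p)
      = fun n : ℕ => ((((2*t)^n / n.factorial * (Real.sqrt π / 2^n * physHermite n y)^2 : ℝ)) : ℂ) := by
    funext n; exact FF_integral t y n
  rw [h2] at h
  have h3 := ((Complex.hasSum_iff _ _).1 h).1
  simp only [Complex.ofReal_re] at h3
  exact h3

end mehler

lemma pointwise_hasSum (s y : ℝ) (hs : 0 < s) :
    HasSum (fun n : ℕ => rexp (-2*s*n) * hermiteFn n y ^ 2)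
      (rexp s / Real.sqrt (2*π*Real.sinh (2*s)) * rexp (-y^2 * Real.tanh s)) := by
  set t := rexp (-(2*s)) with htdef
  have ht0 : 0 < t := Real.exp_pos _
  have ht1 : t < 1 := by
    rw [htdef, Real.exp_lt_one_iff]
    linarith
  have h1t : (0:ℝ) < 1 + t := by positivity
  have hprod : rexp (-(2*s)) * rexp (2*s) = 1 := by rw [← Real.exp_add]; simp
  have htanh : Real.tanh s = (1 - t)/(1 + t) := by
    have h1 : rexp (-(2*s)) = rexp (-s) * rexp (-s) := by rw [← Real.exp_add]; ring_nf
    have h2 : rexp s * rexp (-s) = 1 := by rw [← Real.exp_add]; simp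
    rw [Real.tanh_eq_sinh_div_cosh, Real.sinh_eq, Real.cosh_eq, htdef, h1]
    rw [div_eq_div_iff (by positivity) (by positivity)]
    linear_combination (rexp (-s)) * h2
  have hsinh : 1 - t^2 = (rexp (-s) * rexp (-s)) * (2 * Real.sinh (2*s)) := by
    rw [Real.sinh_eq, htdef, show rexp (-s) * rexp (-s) = rexp (-(2*s)) by
      rw [← Real.exp_add]; ring_nf]
    linear_combination -hprod
  have hsinhpos : 0 < Real.sinh (2*s) := Real.sinh_pos_iff.mpr (by linarith)
  have h1t2 : (0:ℝ) < 1 - t^2 := by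
    rw [hsinh]; positivity
  have h := (mehler_hasSum t y ht0 ht1).mul_right (rexp (-y^2) / (π * Real.sqrt π))
  have hfun : (fun n : ℕ => (2*t)^n / (n.factorial : ℝ) *
      (Real.sqrt π / 2^n * physHermite n y)^2 * (rexp (-y^2) / (π * Real.sqrt π)))
      = fun n : ℕ => rexp (-2*s*n) * hermiteFn n y ^ 2 := by
    funext n
    have hfac : (0:ℝ) < (Nat.factorial n : ℝ) := by
      exact_mod_cast Nat.factorial_pos n
    have hbase : (0:ℝ) < (2:ℝ)^n * Nat.factorial n * Real.sqrt Real.pi := by positivity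
    have hA : (((2 : ℝ) ^ n * Nat.factorial n * Real.sqrt Real.pi) ^ (-(1 : ℝ) / 2)) ^ (2:ℕ)
        = ((2:ℝ)^n * Nat.factorial n * Real.sqrt Real.pi)⁻¹ := by
      rw [← Real.rpow_natCast (((2:ℝ)^n * Nat.factorial n * Real.sqrt Real.pi) ^ (-(1:ℝ)/2)) 2,
        ← Real.rpow_mul hbase.le]
      norm_num
      rw [Real.rpow_neg_one, mul_inv, mul_inv]
      ring
    have hE : rexp (-y ^ 2 / 2) ^ (2:ℕ) = rexp (-y^2) := by
      rw [← Real.exp_nat_mul]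
      congr 1
      push_cast
      ring
    have htpow : rexp (-2*s*(n:ℝ)) = t^n := by
      rw [show -2*s*(n:ℝ) = (n:ℝ) * (-(2*s)) by ring, Real.exp_nat_mul]
    rw [hermiteFn, htpow]
    simp only [mul_pow, div_pow]
    rw [hA, hE, Real.sq_sqrt pi_pos.le]
    have h2n : ((2:ℝ)^n) ≠ 0 := by positivity
    have hsp : Real.sqrt π ≠ 0 := by positivity
    field_simp
  rw [← hfun]
  have hexp2 : rexp (2*t*y^2/(1+t)) * rexp (-y^2) = rexp (-y^2 * Real.tanh s) := by
    rw [← Real.exp_add, htanh]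
    congr 1
    field_simp
    ring
  have hPP : Real.sqrt π * Real.sqrt π = π := Real.mul_self_sqrt pi_pos.le
  have hC0 : (0:ℝ) < Real.sqrt (2*Real.sinh (2*s)) := Real.sqrt_pos.mpr (by positivity)
  have hP0 : (0:ℝ) < Real.sqrt π := Real.sqrt_pos.mpr pi_pos
  have e1 : Real.sqrt (1 - t^2) = (rexp s)⁻¹ * Real.sqrt (2*Real.sinh (2*s)) := by
    rw [hsinh, Real.sqrt_mul (mul_self_nonneg _), Real.sqrt_mul_self (Real.exp_pos (-s)).le,
      Real.exp_neg]
  have e2 : Real.sqrt (2*π*Real.sinh (2*s)) = Real.sqrt π * Real.sqrt (2*Real.sinh (2*s)) := by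
    rw [show 2*π*Real.sinh (2*s) = π * (2*Real.sinh (2*s)) by ring, Real.sqrt_mul pi_pos.le]
  have e3 : Real.sqrt (π/(1 - t^2)) = Real.sqrt π / Real.sqrt (1 - t^2) :=
    Real.sqrt_div pi_pos.le _
  have hval : Real.sqrt π * Real.sqrt (π / (1 - t^2)) * rexp (2*t*y^2/(1+t)) *
      (rexp (-y^2) / (π * Real.sqrt π))
      = rexp s / Real.sqrt (2*π*Real.sinh (2*s)) * rexp (-y^2 * Real.tanh s) := by
    rw [e3, e1, e2, ← hexp2]
    rw [Real.sqrt_mul (show (0:ℝ) ≤ 2 by norm_num) (Real.sinh (2*s))]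
    have hE0 : rexp s ≠ 0 := (Real.exp_pos s).ne'
    field_simp
    linear_combination hPP
  rw [← hval]
  exact h

lemma tail_bound {a c : ℝ} (ha : 0 < a) (hc : 0 < c) :
    ∫ y in Ioi c, rexp (-y^2*a) ≤ rexp (-c^2*a) / (2*a*c) := by
  have hcomm : ∀ y : ℝ, rexp (-y^2*a) = rexp (-a*y^2) := fun y => by ring_nf
  have hint1 : IntegrableOn (fun y : ℝ => rexp (-y^2*a)) (Ioi c) :=
    ((integrable_exp_neg_mul_sq ha).congr (by filter_upwards with y; rw [hcomm])).integrableOn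
  have hint2' : Integrable (fun y : ℝ => y * rexp (-y^2*a)) :=
    (integrable_mul_exp_neg_mul_sq ha).congr (by filter_upwards with y; rw [hcomm])
  have hint2 : IntegrableOn (fun y : ℝ => 1/c * (y * rexp (-y^2*a))) (Ioi c) :=
    (hint2'.const_mul _).integrableOn
  have hval : ∫ y in Ioi c, y * rexp (-y^2*a) = rexp (-c^2*a)/(2*a) := by
    have hF : ∀ y ∈ Ici c, HasDerivAt (fun z : ℝ => -(1/(2*a)) * rexp (-z^2*a))
        (y * rexp (-y^2*a)) y := by
      intro y _
      have h := (((hasDerivAt_pow 2 y).neg.mul_const a)).exp.const_mul (-(1/(2*a)))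
      simp only [Pi.neg_apply] at h
      convert h using 1
      · rfl
      · rfl
      norm_num
      field_simp
    have hmt : Tendsto (fun z : ℝ => -z^2*a) atTop atBot := by
      have := (tendsto_pow_atTop (n := 2) (by norm_num) : Tendsto (fun z : ℝ => z^2) atTop atTop)
      have h2 := this.atTop_mul_const_of_neg (by linarith : -a < 0)
      apply h2.congr
      intro z
      ring
    have htend : Tendsto (fun z : ℝ => -(1/(2*a)) * rexp (-z^2*a)) atTop (𝓝 0) := by
      have := (Real.tendsto_exp_atBot.comp hmt).const_mul (-(1/(2*a)))
      simpa using this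
    have := integral_Ioi_of_hasDerivAt_of_tendsto' hF hint2'.integrableOn htend
    rw [this]
    field_simp
    ring
  have hmono : ∫ y in Ioi c, rexp (-y^2*a) ≤ ∫ y in Ioi c, 1/c * (y * rexp (-y^2*a)) := by
    apply setIntegral_mono_on hint1 hint2 measurableSet_Ioi
    intro y hy
    rw [mem_Ioi] at hy
    have h1 : 1 ≤ 1/c * y := by rw [one_div, inv_mul_eq_div, le_div_iff₀ hc]; linarith
    nlinarith [Real.exp_pos (-y^2*a)]
  calc ∫ y in Ioi c, rexp (-y^2*a) ≤ ∫ y in Ioi c, 1/c * (y * rexp (-y^2*a)) := hmono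
    _ = 1/c * ∫ y in Ioi c, y * rexp (-y^2*a) := integral_const_mul _ _
    _ = rexp (-c^2*a) / (2*a*c) := by rw [hval]; field_simp

theorem stmt15 (s c : ℝ) (hs : 0 < s) (hc : 0 < c) :
    (∫ y in Set.Ioi c, ∑' n : ℕ, Real.exp (-2 * s * n) * hermiteFn n y ^ 2) ≤
      Real.exp s * Real.exp (-(c ^ 2) * Real.tanh s) /
        (2 * Real.sqrt (2 * Real.pi * Real.sinh (2 * s)) * Real.tanh s * c) := by
  have hsh : 0 < Real.sinh (2*s) := Real.sinh_pos_iff.mpr (by linarith)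
  have hta : 0 < Real.tanh s := by
    rw [Real.tanh_eq_sinh_div_cosh]
    exact div_pos (Real.sinh_pos_iff.mpr hs) (Real.cosh_pos s)
  have hK : (0:ℝ) ≤ rexp s / Real.sqrt (2*π*Real.sinh (2*s)) := by positivity
  have hint : (fun y : ℝ => ∑' n : ℕ, Real.exp (-2 * s * n) * hermiteFn n y ^ 2)
      = fun y : ℝ => rexp s / Real.sqrt (2*π*Real.sinh (2*s)) * rexp (-y^2 * Real.tanh s) := by
    funext y
    exact (pointwise_hasSum s y hs).tsum_eq
  rw [hint, integral_const_mul]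
  have hb := tail_bound hta hc
  have hsq : 0 < Real.sqrt (2*π*Real.sinh (2*s)) :=
    Real.sqrt_pos.mpr (mul_pos (mul_pos two_pos pi_pos) hsh)
  calc rexp s / Real.sqrt (2*π*Real.sinh (2*s)) * ∫ y in Ioi c, rexp (-y^2 * Real.tanh s)
      ≤ rexp s / Real.sqrt (2*π*Real.sinh (2*s)) *
        (rexp (-c^2*Real.tanh s) / (2*Real.tanh s*c)) := mul_le_mul_of_nonneg_left hb hK
    _ = Real.exp s * Real.exp (-(c ^ 2) * Real.tanh s) /
        (2 * Real.sqrt (2 * Real.pi * Real.sinh (2 * s)) * Real.tanh s * c) := by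
      field_simp
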